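/- The group SL(2,ℝ) cannot be written as a countable union of left translates of a fixed solvable subgroup. -/

import Mathlib

namespace SL2PingPong

abbrev SL2 := Matrix.SpecialLinearGroup (Fin 2) ℝ

def U (t : ℝ) : SL2 := ⟨!![1, t; 0, 1], by simp [Matrix.det_fin_two_of]⟩
def Lo (t : ℝ) : SL2 := ⟨!![1, 0; t, 1], by simp [Matrix.det_fin_two_of]⟩

lemma U_mul (s t : ℝ) : U s * U t = U (s + t) := by
  apply Subtype.ext
  show (U s : Matrix (Fin 2) (Fin 2) ℝ) * (U t : Matrix (Fin 2) (Fin 2) ℝ) = _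
  simp [U, Matrix.mul_fin_two, add_comm]

lemma Lo_mul (s t : ℝ) : Lo s * Lo t = Lo (s + t) := by
  apply Subtype.ext
  show (Lo s : Matrix (Fin 2) (Fin 2) ℝ) * (Lo t : Matrix (Fin 2) (Fin 2) ℝ) = _
  simp [Lo, Matrix.mul_fin_two, add_comm]

lemma U_zero : U 0 = 1 := by
  apply Subtype.ext
  show _ = (1 : Matrix (Fin 2) (Fin 2) ℝ)
  simp [U, Matrix.one_fin_two]

lemma Lo_zero : Lo 0 = 1 := by
  apply Subtype.ext
  show _ = (1 : Matrix (Fin 2) (Fin 2) ℝ)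
  simp [Lo, Matrix.one_fin_two]

lemma U_inv (t : ℝ) : (U t)⁻¹ = U (-t) :=
  inv_eq_of_mul_eq_one_right (by rw [U_mul, add_neg_cancel, U_zero])

lemma Lo_inv (t : ℝ) : (Lo t)⁻¹ = Lo (-t) :=
  inv_eq_of_mul_eq_one_right (by rw [Lo_mul, add_neg_cancel, Lo_zero])

lemma U_pow (t : ℝ) (n : ℕ) : U t ^ n = U (n * t) := by
  induction n with
  | zero => simp [U_zero]
  | succ n ih => rw [pow_succ, ih, U_mul]; push_cast; ring_nf

lemma Lo_pow (t : ℝ) (n : ℕ) : Lo t ^ n = Lo (n * t) := by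
  induction n with
  | zero => simp [Lo_zero]
  | succ n ih => rw [pow_succ, ih, Lo_mul]; push_cast; ring_nf

/-- action of a matrix on a pair of reals -/
def act (M : SL2) (v : ℝ × ℝ) : ℝ × ℝ :=
  (M.1 0 0 * v.1 + M.1 0 1 * v.2, M.1 1 0 * v.1 + M.1 1 1 * v.2)

lemma act_one (v : ℝ × ℝ) : act 1 v = v := by
  simp [act, Matrix.SpecialLinearGroup.coe_one]

lemma act_mul (M N : SL2) (v : ℝ × ℝ) : act (M * N) v = act M (act N v) := by
  show act ⟨M.1 * N.1, _⟩ v = _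
  simp only [act, Matrix.mul_apply, Fin.sum_univ_two, Prod.mk.injEq]
  constructor <;> ring

lemma act_U (t : ℝ) (v : ℝ × ℝ) : act (U t) v = (v.1 + t * v.2, v.2) := by
  simp [act, U]

lemma act_Lo (t : ℝ) (v : ℝ × ℝ) : act (Lo t) v = (v.1, v.2 + t * v.1) := by
  simp [act, Lo, add_comm]



lemma abs_le_abs_add {x w : ℝ} (h : 0 ≤ w * x) : |x| ≤ |x + w| := by
  rcases lt_trichotomy x 0 with hx | hx | hx
  · have hw : 0 ≤ w → w = 0 := by intro h0; nlinarith
    rcases le_or_gt 0 w with h0 | h0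
    · rw [hw h0]; simp
    · rw [abs_of_neg hx, abs_of_neg (by linarith)]; linarith
  · simp [hx]
  · have hw : 0 ≤ w := by nlinarith
    rw [abs_of_pos hx, abs_of_nonneg (by linarith)]; linarith

/-- same-type step: previous state dominated by `x`, new letter adds `e*y` to x coherently -/
lemma step_same {e x y : ℝ} (he : 4 ≤ |e|) (h1 : 2 * |y| ≤ |x|) (h2 : 2 ≤ |x|)
    (h3 : 0 ≤ e * y * x) :
    2 * |y| ≤ |x + e * y| ∧ 2 ≤ |x + e * y| ∧ 0 ≤ e * y * (x + e * y) := by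
  have key : |x| ≤ |x + e * y| := abs_le_abs_add (by nlinarith)
  refine ⟨by linarith, by linarith, by nlinarith [sq_nonneg (e * y)]⟩

/-- switch step: previous state dominated by `y`, new letter adds `e*y` to `x` -/
lemma step_switch {e x y : ℝ} (he : 4 ≤ |e|) (h1 : 2 * |x| ≤ |y|) (h2 : 2 ≤ |y|) :
    2 * |y| ≤ |x + e * y| ∧ 2 ≤ |x + e * y| ∧ 0 ≤ e * y * (x + e * y) := by
  have hxy : |e * y| - |x| ≤ |x + e * y| := by
    have h0 : |e * y| ≤ |x + e * y| + |x| := by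
      have h0' := abs_add_le (x + e * y) (-x)
      rw [abs_neg, show x + e * y + -x = e * y by ring] at h0'
      exact h0'
    linarith
  have hey : |e * y| = |e| * |y| := abs_mul e y
  have h4 : 4 * |y| ≤ |e| * |y| :=
    mul_le_mul_of_nonneg_right he (abs_nonneg y)
  have hbig : 2 * |y| ≤ |x + e * y| := by linarith
  refine ⟨hbig, by linarith, ?_⟩
  -- sign: e*y*(x + e*y) = e*y*x + (e*y)^2, and |e*y*x| ≤ |e*y| * |y| / 2 ≤ (e*y)^2 / 8
  have h5 : -(|e * y| * |x|) ≤ e * y * x := by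
    have := neg_abs_le (e * y * x)
    rw [abs_mul (e*y) x] at this
    linarith
  have h6 : |e * y| ^ 2 = (e * y) ^ 2 := sq_abs _
  nlinarith [abs_nonneg (e * y), abs_nonneg x, abs_nonneg y,
    mul_le_mul_of_nonneg_left h1 (abs_nonneg (e * y))]

/-- base step: applied to the vector (1,1) -/
lemma step_base {e : ℝ} (he : 4 ≤ |e|) :
    2 * |(1:ℝ)| ≤ |1 + e * 1| ∧ 2 ≤ |1 + e * 1| ∧ 0 ≤ e * 1 * (1 + e * 1) := by
  rcases le_or_gt 0 e with h | h
  · have : |e| = e := abs_of_nonneg h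
    rw [abs_one, mul_one, mul_one, abs_of_nonneg (by linarith)]
    refine ⟨by linarith, by linarith, by nlinarith⟩
  · have : |e| = -e := abs_of_neg h
    rw [abs_one, mul_one, mul_one, abs_of_neg (by linarith)]
    refine ⟨by linarith, by linarith, by nlinarith⟩



section PingPong
variable (a b : ℝ)

/-- generators -/
def gen : Bool → SL2 := fun i => if i then U a else Lo b

/-- a letter of a word, as an element of SL2 -/
def ent (p : Bool × Bool) : SL2 := cond p.2 (gen a b p.1) (gen a b p.1)⁻¹

lemma ent_true (s : Bool) : ent a b (true, s) = U (cond s a (-a)) := by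
  cases s <;> simp [ent, gen, U_inv]

lemma ent_false (s : Bool) : ent a b (false, s) = Lo (cond s b (-b)) := by
  cases s <;> simp [ent, gen, Lo_inv]

def wordProd (L : List (Bool × Bool)) : SL2 := (L.map (ent a b)).prod

lemma wordProd_cons (c : Bool × Bool) (L : List (Bool × Bool)) :
    wordProd a b (c :: L) = ent a b c * wordProd a b L := by
  simp [wordProd]

/-- the no-cancellation property of a word -/
def Reduced (L : List (Bool × Bool)) : Prop :=
  ∀ (L₁ L₂ : List (Bool × Bool)) (i s : Bool), L ≠ L₁ ++ (i, s) :: (i, !s) :: L₂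

lemma Reduced.tail {c : Bool × Bool} {L : List (Bool × Bool)}
    (h : Reduced (c :: L)) : Reduced L := fun L₁ L₂ i s e => h (c :: L₁) L₂ i s (by rw [e]; rfl)

lemma Reduced.head {i s₁ s₂ : Bool} {L : List (Bool × Bool)}
    (h : Reduced ((i, s₁) :: (i, s₂) :: L)) : s₂ = s₁ := by
  by_contra hne
  have h2 : s₂ = !s₁ := by cases s₁ <;> cases s₂ <;> simp_all
  exact h [] L i s₁ (by rw [h2]; rfl)

/-- invariant of the ping-pong induction -/
def Good : Bool × Bool → ℝ × ℝ → Prop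
  | (true, s), v => 2 * |v.2| ≤ |v.1| ∧ 2 ≤ |v.1| ∧ 0 ≤ (cond s a (-a)) * v.2 * v.1
  | (false, s), v => 2 * |v.1| ≤ |v.2| ∧ 2 ≤ |v.2| ∧ 0 ≤ (cond s b (-b)) * v.1 * v.2

lemma abs_cond (s : Bool) (t : ℝ) : |cond s t (-t)| = |t| := by cases s <;> simp

lemma main_induction (ha : 4 ≤ |a|) (hb : 4 ≤ |b|) :
    ∀ (L : List (Bool × Bool)) (c : Bool × Bool), Reduced (c :: L) →
      Good a b c (act (wordProd a b (c :: L)) (1, 1)) := by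
  intro L
  induction L with
  | nil =>
    rintro ⟨i, s⟩ _
    cases i
    · rw [wordProd, List.map_singleton, List.prod_singleton, ent_false, act_Lo]
      have h := step_base (e := cond s b (-b)) (by rw [abs_cond]; exact hb)
      exact ⟨by simpa using h.1, by simpa using h.2.1, by simpa using h.2.2⟩
    · rw [wordProd, List.map_singleton, List.prod_singleton, ent_true, act_U]
      have h := step_base (e := cond s a (-a)) (by rw [abs_cond]; exact ha)
      exact ⟨by simpa using h.1, by simpa using h.2.1, by simpa using h.2.2⟩
  | cons c' L' ih =>
    rintro ⟨i, s⟩ hred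
    obtain ⟨i', s'⟩ := c'
    have hprev := ih (i', s') hred.tail
    rw [wordProd_cons, act_mul]
    set v := act (wordProd a b ((i', s') :: L')) (1, 1) with hv
    obtain ⟨x, y⟩ := v
    cases i
    · -- new letter is lower triangular: acts on y
      rw [ent_false, act_Lo]
      cases i'
      · -- same type
        have hss : s' = s := hred.head
        subst hss
        obtain ⟨h1, h2, h3⟩ := hprev
        have := step_same (e := cond s' b (-b)) (by rw [abs_cond]; exact hb) h1 h2 h3
        exact ⟨this.1, this.2.1, this.2.2⟩
      · -- switch from upper type
        obtain ⟨h1, h2, _⟩ := hprev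
        have := step_switch (e := cond s b (-b)) (by rw [abs_cond]; exact hb)
          (x := y) (y := x) h1 h2
        exact ⟨this.1, this.2.1, this.2.2⟩
    · -- new letter is upper triangular: acts on x
      rw [ent_true, act_U]
      cases i'
      · -- switch from lower type
        obtain ⟨h1, h2, _⟩ := hprev
        have := step_switch (e := cond s a (-a)) (by rw [abs_cond]; exact ha) h1 h2
        exact ⟨this.1, this.2.1, this.2.2⟩
      · -- same type
        have hss : s' = s := hred.head
        subst hss
        obtain ⟨h1, h2, h3⟩ := hprev
        have := step_same (e := cond s' a (-a)) (by rw [abs_cond]; exact ha) h1 h2 h3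
        exact ⟨this.1, this.2.1, this.2.2⟩

lemma reduced_toWord (w : FreeGroup Bool) : Reduced w.toWord :=
  fun _ _ _ _ e => FreeGroup.reduce.not ((FreeGroup.reduce_toWord w).trans e)

lemma lift_injective (ha : 4 ≤ |a|) (hb : 4 ≤ |b|) :
    Function.Injective (FreeGroup.lift (gen a b)) := by
  refine (injective_iff_map_eq_one _).mpr ?_
  intro w hw
  by_contra hne
  have hnil : w.toWord ≠ [] := fun h => hne (FreeGroup.toWord_eq_nil_iff.1 h)
  obtain ⟨c, L, hL⟩ : ∃ c L, w.toWord = c :: L := by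
    cases h : w.toWord with
    | nil => exact absurd h hnil
    | cons c L => exact ⟨c, L, rfl⟩
  have hred : Reduced (c :: L) := hL ▸ reduced_toWord w
  have hgood := main_induction a b ha hb L c hred
  have hlift : FreeGroup.lift (gen a b) w = wordProd a b w.toWord := by
    conv_lhs => rw [← FreeGroup.mk_toWord (x := w)]
    rw [FreeGroup.lift_mk]
    rfl
  have hw' : wordProd a b (c :: L) = 1 := by rw [← hL, ← hlift, hw]
  rw [hw', act_one] at hgood
  obtain ⟨i, s⟩ := c
  cases i <;> · obtain ⟨-, h2, -⟩ := hgood; norm_num at h2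

end PingPong

lemma exists_ne_mem (S : Subgroup SL2) (g : ℕ → SL2)
    (hcov : (⋃ n, (fun x => g n * x) '' (S : Set SL2)) = Set.univ)
    (w : ℝ → SL2) (hw : ∀ s t : ℝ, (w s)⁻¹ * w t = w (t - s)) :
    ∃ u : ℝ, u ≠ 0 ∧ w u ∈ S := by
  have h' : ∀ t : ℝ, ∃ n : ℕ, (g n)⁻¹ * w t ∈ S := by
    intro t
    have hm : w t ∈ (⋃ n, (fun x => g n * x) '' (S : Set SL2)) := hcov ▸ Set.mem_univ _
    rw [Set.mem_iUnion] at hm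
    obtain ⟨n, y, hy, he⟩ := hm
    exact ⟨n, by rw [← he]; simpa using hy⟩
  choose F hF using h'
  have hfib : ∃ n, ¬(F ⁻¹' {n}).Countable := by
    by_contra hall
    push_neg at hall
    refine Cardinal.not_countable_real ?_
    have he : (Set.univ : Set ℝ) = ⋃ n, F ⁻¹' {n} := by
      ext t
      simp only [Set.mem_univ, true_iff, Set.mem_iUnion, Set.mem_preimage,
        Set.mem_singleton_iff]
      exact ⟨F t, rfl⟩
    rw [he]
    exact Set.countable_iUnion hall
  obtain ⟨n, hn⟩ := hfib
  have hnt : (F ⁻¹' {n}).Nontrivial :=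
    Set.not_subsingleton_iff.mp fun h => hn h.countable
  obtain ⟨t, ht, t', ht', hne⟩ := hnt
  rw [Set.mem_preimage, Set.mem_singleton_iff] at ht ht'
  refine ⟨t' - t, sub_ne_zero.2 (Ne.symm hne), ?_⟩
  have h1 : (g n)⁻¹ * w t ∈ S := ht ▸ hF t
  have h2 : (g n)⁻¹ * w t' ∈ S := ht' ▸ hF t'
  have hm := S.mul_mem (S.inv_mem h1) h2
  rw [show ((g n)⁻¹ * w t)⁻¹ * ((g n)⁻¹ * w t') = (w t)⁻¹ * w t' by group, hw] at hm
  exact hm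

lemma exists_big (S : Subgroup SL2) (w : ℝ → SL2) (hpow : ∀ (t : ℝ) (n : ℕ), w t ^ n = w ((n : ℝ) * t))
    (u : ℝ) (hu : u ≠ 0) (hmem : w u ∈ S) : ∃ c : ℝ, 4 ≤ |c| ∧ w c ∈ S := by
  obtain ⟨k, hk⟩ := exists_nat_ge (4 / |u|)
  refine ⟨(k : ℝ) * u, ?_, by rw [← hpow]; exact pow_mem hmem k⟩
  have hu' : 0 < |u| := abs_pos.2 hu
  rw [abs_mul, Nat.abs_cast]
  rw [div_le_iff₀ hu'] at hk
  exact hk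

lemma freeGroup_bool_not_solvable : ¬ IsSolvable (FreeGroup Bool) := by
  intro h
  have h1 : (finRotate 5).IsCycle := isCycle_finRotate_of_le (by norm_num)
  have h2 : (finRotate 5).support = Finset.univ := support_finRotate_of_le (by norm_num)
  set σ : Equiv.Perm (Fin 5) := finRotate 5 with hσ
  set τ : Equiv.Perm (Fin 5) := Equiv.swap 0 (σ 0) with hτ
  let χ : FreeGroup Bool →* Equiv.Perm (Fin 5) := FreeGroup.lift (fun i => if i then σ else τ)
  have hsurj : Function.Surjective χ := by
    rw [← MonoidHom.range_eq_top, eq_top_iff,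
      ← Equiv.Perm.closure_cycle_adjacent_swap h1 h2 0, Subgroup.closure_le]
    rintro x hx
    rcases hx with rfl | hx
    · exact ⟨FreeGroup.of true, by simp [χ]⟩
    · rw [Set.mem_singleton_iff] at hx
      subst hx
      exact ⟨FreeGroup.of false, by simp [χ, hτ]⟩
  haveI : Group.IsSolvable (FreeGroup Bool) := h
  exact Equiv.Perm.fin_5_not_solvable (solvable_of_surjective hsurj)

end SL2PingPong

open SL2PingPong in
/-- The group SL(2,ℝ) cannot be written as a countable union of
left translates of a fixed solvable subgroup: there is no solvable subgroup `S`
and countable family `gₙ` with `SL(2,ℝ) = ⋃ₙ gₙ • S`. -/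
theorem sl2_not_countable_union_of_solvable_cosets
    (S : Subgroup (Matrix.SpecialLinearGroup (Fin 2) ℝ)) (hS : IsSolvable S)
    (g : ℕ → Matrix.SpecialLinearGroup (Fin 2) ℝ) :
    (⋃ n : ℕ, (fun x => g n * x) '' (S : Set (Matrix.SpecialLinearGroup (Fin 2) ℝ)))
      ≠ Set.univ := by
  intro hcov
  obtain ⟨u, hu0, hu⟩ := exists_ne_mem S g hcov U
    (fun s t => by rw [U_inv, U_mul, neg_add_eq_sub])
  obtain ⟨v, hv0, hv⟩ := exists_ne_mem S g hcov Lo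
    (fun s t => by rw [Lo_inv, Lo_mul, neg_add_eq_sub])
  obtain ⟨aa, haa, haS⟩ := exists_big S U U_pow u hu0 hu
  obtain ⟨bb, hbb, hbS⟩ := exists_big S Lo Lo_pow v hv0 hv
  let ψ : FreeGroup Bool →* S :=
    FreeGroup.lift (fun i => if i then (⟨U aa, haS⟩ : S) else (⟨Lo bb, hbS⟩ : S))
  have hcomm : S.subtype.comp ψ = FreeGroup.lift (gen aa bb) := by
    apply FreeGroup.ext_hom
    intro i
    cases i <;> simp [ψ, gen, FreeGroup.lift_apply_of]
  have hinj : Function.Injective ψ := by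
    have h2 : Function.Injective (S.subtype.comp ψ) := by
      rw [hcomm]; exact lift_injective aa bb haa hbb
    exact fun x y e => h2 (by simp [MonoidHom.comp_apply, e])
  haveI : Group.IsSolvable S := hS
  exact freeGroup_bool_not_solvable (solvable_of_solvable_injective hinj)
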